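/- Let G be a double groupoid satisfying the filling condition and a an object of G. On the set G(a) of pairs (g,u) with g a horizontal morphism, u a vertical morphism, t^h(g) = a = s^v(u) and s^h(g) = t^v(u), the relation (g,u) ~ (g',u') defined by the existence of two squares α, α' with t^h(α) = t^h(α'), s^v(α) = s^v(α'), s^h(α) = u, s^h(α') = u', t^v(α) = g, t^v(α') = g', is an equivalence relation. -/
import Mathlib

/-! ## Double categories and double groupoids (combinatorial formalization)

A double category is given by objects, horizontal morphisms `H a b` (from `a` to `b`),
vertical morphisms `V a b`, and squares `Sq f g u w` where `f : H a c` is the bottom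
(vertical-source) edge, `g : H b d` the top (vertical-target) edge, `u : V a b` the
horizontal-source edge and `w : V c d` the horizontal-target edge. -/

universe u₁ u₂ u₃ u₄

/-- The operations of a (small) double category: the four compositions and identities. -/
structure DCS (Ob : Type u₁) (H : Ob → Ob → Type u₂) (V : Ob → Ob → Type u₃)
    (Sq : ∀ ⦃a b c d : Ob⦄, H a c → H b d → V a b → V c d → Type u₄) where
  hComp : ∀ {a b c : Ob}, H b c → H a b → H a c
  hId : ∀ a : Ob, H a a
  vComp : ∀ {a b c : Ob}, V b c → V a b → V a c
  vId : ∀ a : Ob, V a a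
  /-- horizontal composition of squares (along a common vertical edge) -/
  hCompSq : ∀ {a b c d a' b' : Ob} {f : H a c} {g : H b d} {u : V a b} {w : V c d}
    {f' : H a' a} {g' : H b' b} {u' : V a' b'},
    Sq f g u w → Sq f' g' u' u → Sq (hComp f f') (hComp g g') u' w
  /-- vertical composition of squares (along a common horizontal edge) -/
  vCompSq : ∀ {a b c d a₀ c₀ : Ob} {f : H a c} {g : H b d} {u : V a b} {w : V c d}
    {f₀ : H a₀ c₀} {u₀ : V a₀ a} {w₀ : V c₀ c},
    Sq f g u w → Sq f₀ f u₀ w₀ → Sq f₀ g (vComp u u₀) (vComp w w₀)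
  /-- the horizontal identity square `I^h u` on a vertical morphism -/
  idSqH : ∀ {a b : Ob} (u : V a b), Sq (hId a) (hId b) u u
  /-- the vertical identity square `I^v f` on a horizontal morphism -/
  idSqV : ∀ {a c : Ob} (f : H a c), Sq f f (vId a) (vId c)

/-- The operations of a double groupoid: a double category together with inverses
for horizontal and vertical morphisms and for squares in both directions. -/
structure DGS (Ob : Type u₁) (H : Ob → Ob → Type u₂) (V : Ob → Ob → Type u₃)
    (Sq : ∀ ⦃a b c d : Ob⦄, H a c → H b d → V a b → V c d → Type u₄) extends
    DCS Ob H V Sq where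
  hInv : ∀ {a b : Ob}, H a b → H b a
  vInv : ∀ {a b : Ob}, V a b → V b a
  hInvSq : ∀ {a b c d : Ob} {f : H a c} {g : H b d} {u : V a b} {w : V c d},
    Sq f g u w → Sq (hInv f) (hInv g) w u
  vInvSq : ∀ {a b c d : Ob} {f : H a c} {g : H b d} {u : V a b} {w : V c d},
    Sq f g u w → Sq g f (vInv u) (vInv w)

namespace DCS

variable {Ob : Type u₁} {H : Ob → Ob → Type u₂} {V : Ob → Ob → Type u₃}
  {Sq : ∀ ⦃a b c d : Ob⦄, H a c → H b d → V a b → V c d → Type u₄}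

/-- The axioms of a double category (associativity, identities, compatibility of
identity squares with compositions, and the interchange law).  Since the types of
squares depend on their boundaries, some equations are stated as `HEq`. -/
structure Lawful (D : DCS Ob H V Sq) : Prop where
  hAssoc : ∀ {a b c d : Ob} (f : H c d) (g : H b c) (h : H a b),
    D.hComp (D.hComp f g) h = D.hComp f (D.hComp g h)
  hIdLeft : ∀ {a b : Ob} (f : H a b), D.hComp (D.hId b) f = f
  hIdRight : ∀ {a b : Ob} (f : H a b), D.hComp f (D.hId a) = f
  vAssoc : ∀ {a b c d : Ob} (u : V c d) (v : V b c) (w : V a b),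
    D.vComp (D.vComp u v) w = D.vComp u (D.vComp v w)
  vIdLeft : ∀ {a b : Ob} (u : V a b), D.vComp (D.vId b) u = u
  vIdRight : ∀ {a b : Ob} (u : V a b), D.vComp u (D.vId a) = u
  sqHAssoc : ∀ {a b c d a' b' a'' b'' : Ob} {f : H a c} {g : H b d} {u : V a b} {w : V c d}
    {f' : H a' a} {g' : H b' b} {u' : V a' b'} {f'' : H a'' a'} {g'' : H b'' b'}
    {u'' : V a'' b''} (α : Sq f g u w) (β : Sq f' g' u' u) (γ : Sq f'' g'' u'' u'),
    HEq (D.hCompSq (D.hCompSq α β) γ) (D.hCompSq α (D.hCompSq β γ))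
  sqHIdLeft : ∀ {a b c d : Ob} {f : H a c} {g : H b d} {u : V a b} {w : V c d}
    (α : Sq f g u w), HEq (D.hCompSq (D.idSqH w) α) α
  sqHIdRight : ∀ {a b c d : Ob} {f : H a c} {g : H b d} {u : V a b} {w : V c d}
    (α : Sq f g u w), HEq (D.hCompSq α (D.idSqH u)) α
  sqVAssoc : ∀ {a b c d a₀ c₀ a₁ c₁ : Ob} {f : H a c} {g : H b d} {u : V a b} {w : V c d}
    {f₀ : H a₀ c₀} {u₀ : V a₀ a} {w₀ : V c₀ c} {f₁ : H a₁ c₁} {u₁ : V a₁ a₀} {w₁ : V c₁ c₀}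
    (α : Sq f g u w) (β : Sq f₀ f u₀ w₀) (γ : Sq f₁ f₀ u₁ w₁),
    HEq (D.vCompSq (D.vCompSq α β) γ) (D.vCompSq α (D.vCompSq β γ))
  sqVIdLeft : ∀ {a b c d : Ob} {f : H a c} {g : H b d} {u : V a b} {w : V c d}
    (α : Sq f g u w), HEq (D.vCompSq (D.idSqV g) α) α
  sqVIdRight : ∀ {a b c d : Ob} {f : H a c} {g : H b d} {u : V a b} {w : V c d}
    (α : Sq f g u w), HEq (D.vCompSq α (D.idSqV f)) α
  idSqDiag : ∀ a : Ob, D.idSqH (D.vId a) = D.idSqV (D.hId a)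
  idSqVComp : ∀ {a a' c : Ob} (f : H a c) (f' : H a' a),
    D.idSqV (D.hComp f f') = D.hCompSq (D.idSqV f) (D.idSqV f')
  idSqHComp : ∀ {a a₀ b : Ob} (u : V a b) (u₀ : V a₀ a),
    D.idSqH (D.vComp u u₀) = D.vCompSq (D.idSqH u) (D.idSqH u₀)
  interchange : ∀ {a b c d a' b' a₀ c₀ a₀' : Ob}
    {f : H a c} {g : H b d} {u : V a b} {w : V c d}
    {f' : H a' a} {g' : H b' b} {u' : V a' b'}
    {f₀ : H a₀ c₀} {u₀ : V a₀ a} {w₀ : V c₀ c}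
    {f₀' : H a₀' a₀} {u₀' : V a₀' a'} -- bottom-right square with top edge f'
    (α : Sq f g u w) (β : Sq f' g' u' u) (γ : Sq f₀ f u₀ w₀) (δ : Sq f₀' f' u₀' u₀),
    D.vCompSq (D.hCompSq α β) (D.hCompSq γ δ) =
      D.hCompSq (D.vCompSq α γ) (D.vCompSq β δ)

/-- The *filling condition*: for every horizontal morphism `g` (the prospective
vertical target) and every vertical morphism `u` (the prospective horizontal source)
with `s^h g = t^v u`, there is a square with horizontal source `u` and vertical
target `g`. -/
def Filling (_ : DCS Ob H V Sq) : Prop :=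
  ∀ {a b d : Ob} (g : H b d) (u : V a b),
    ∃ (c : Ob) (f : H a c) (w : V c d), Nonempty (Sq f g u w)

end DCS

namespace DGS

variable {Ob : Type u₁} {H : Ob → Ob → Type u₂} {V : Ob → Ob → Type u₃}
  {Sq : ∀ ⦃a b c d : Ob⦄, H a c → H b d → V a b → V c d → Type u₄}

/-- The axioms of a double groupoid: a lawful double category in which the given
inversion operations really are two-sided inverses, for morphisms and for squares. -/
structure Lawful (D : DGS Ob H V Sq) : Prop where
  toLawfulDCS : D.toDCS.Lawful
  hInvLeft : ∀ {a b : Ob} (f : H a b), D.hComp (D.hInv f) f = D.hId a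
  hInvRight : ∀ {a b : Ob} (f : H a b), D.hComp f (D.hInv f) = D.hId b
  vInvLeft : ∀ {a b : Ob} (u : V a b), D.vComp (D.vInv u) u = D.vId a
  vInvRight : ∀ {a b : Ob} (u : V a b), D.vComp u (D.vInv u) = D.vId b
  sqHInvRight : ∀ {a b c d : Ob} {f : H a c} {g : H b d} {u : V a b} {w : V c d}
    (α : Sq f g u w), HEq (D.hCompSq α (D.hInvSq α)) (D.idSqH w)
  sqHInvLeft : ∀ {a b c d : Ob} {f : H a c} {g : H b d} {u : V a b} {w : V c d}
    (α : Sq f g u w), HEq (D.hCompSq (D.hInvSq α) α) (D.idSqH u)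
  sqVInvRight : ∀ {a b c d : Ob} {f : H a c} {g : H b d} {u : V a b} {w : V c d}
    (α : Sq f g u w), HEq (D.vCompSq α (D.vInvSq α)) (D.idSqV g)
  sqVInvLeft : ∀ {a b c d : Ob} {f : H a c} {g : H b d} {u : V a b} {w : V c d}
    (α : Sq f g u w), HEq (D.vCompSq (D.vInvSq α) α) (D.idSqV f)

end DGS

section HomotopyGroupsOfDoubleGroupoids

variable {Ob : Type u₁} {H : Ob → Ob → Type u₂} {V : Ob → Ob → Type u₃}
  {Sq : ∀ ⦃a b c d : Ob⦄, H a c → H b d → V a b → V c d → Type u₄}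


/-- Two objects `a, b` of a double groupoid are *connected* when there is a pair
`(g, u)` consisting of a horizontal morphism `g` and a vertical morphism `u` with
`s^h g = t^v u`, `t^h g = b` and `s^v u = a`. -/
def DCS.Connected (_ : DCS Ob H V Sq) (a b : Ob) : Prop :=
  ∃ x : Ob, Nonempty (H x b) ∧ Nonempty (V a x)

/-- `π₀` of a double groupoid: connectedness classes of objects. -/
def DCS.Pi0 (D : DCS Ob H V Sq) : Type u₁ := Quot D.Connected

/-- Representatives for `π₁(G, a)`: pairs `(g, u)` with `g` a horizontal morphism,
`u` a vertical morphism, `t^h g = a = s^v u` and `s^h g = t^v u`. -/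
def DCS.Pi1Rep (_ : DCS Ob H V Sq) (a : Ob) : Type (max u₁ u₂ u₃) :=
  Σ x : Ob, H x a × V a x

/-- The relation `(g, u) ∼ (g', u')` on `π₁`-representatives: there exist two squares
with the same horizontal target `w` and the same vertical source `f`, with horizontal
sources `u` resp. `u'`, and vertical targets `g` resp. `g'`. -/
def DCS.Pi1Rel (D : DCS Ob H V Sq) (a : Ob) (p q : D.Pi1Rep a) : Prop :=
  ∃ (c : Ob) (f : H a c) (w : V c a),
    Nonempty (Sq f p.2.1 p.2.2 w) ∧ Nonempty (Sq f q.2.1 q.2.2 w)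

/-- `π₁(G, a)` as a set: classes of pairs `(g, u)` under the above relation. -/
def DCS.Pi1 (D : DCS Ob H V Sq) (a : Ob) : Type (max u₁ u₂ u₃) :=
  Quot (D.Pi1Rel a)

/-- The carrier of `π₂(G, a)`: squares all of whose boundary edges are identities
at `a`. -/
def DCS.Pi2 (D : DCS Ob H V Sq) (a : Ob) : Type u₄ :=
  Sq (D.hId a) (D.hId a) (D.vId a) (D.vId a)

/-- The specification of the product on `π₁(G, a)`:
`[g₁, u₁] ∘ [g₂, u₂] = [g₁ ∘ₕ g, u ∘ᵥ u₂]`, where `γ` is any square with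
`s^v γ = g₂` and `t^h γ = u₁`, `g = t^v γ` and `u = s^h γ`. -/
def DCS.Pi1MulSpec (D : DCS Ob H V Sq) (a : Ob) (mul : D.Pi1 a → D.Pi1 a → D.Pi1 a) : Prop :=
  ∀ (x₁ : Ob) (g₁ : H x₁ a) (u₁ : V a x₁) (x₂ : Ob) (g₂ : H x₂ a) (u₂ : V a x₂)
    (b : Ob) (g : H b x₁) (u : V x₂ b) (_ : Sq g₂ g u u₁),
    mul (Quot.mk _ ⟨x₁, g₁, u₁⟩) (Quot.mk _ ⟨x₂, g₂, u₂⟩) =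
      Quot.mk _ ⟨b, D.hComp g₁ g, D.vComp u u₂⟩

/-- The specification of inversion on `π₁(G, a)`:
`[g, u]⁻¹ = [t^v α, s^h α]` for any square `α` with `t^h α = u⁻¹ᵛ` and `s^v α = g⁻¹ʰ`. -/
def DGS.Pi1InvSpec (D : DGS Ob H V Sq) (a : Ob) (inv : D.toDCS.Pi1 a → D.toDCS.Pi1 a) : Prop :=
  ∀ (x : Ob) (g : H x a) (u : V a x) (b : Ob) (g' : H b a) (u' : V a b)
    (_ : Sq (D.hInv g) g' u' (D.vInv u)),
    inv (Quot.mk _ ⟨x, g, u⟩) = Quot.mk _ ⟨b, g', u'⟩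

end HomotopyGroupsOfDoubleGroupoids

/-- For a double groupoid satisfying the filling condition and an
object `a`, the relation `(g, u) ∼ (g', u')` on the set `G(a)` of matching pairs —
given by the existence of two squares with common horizontal target and common
vertical source, with horizontal sources `u`, `u'` and vertical targets `g`, `g'`
respectively — is an equivalence relation. -/
theorem pi1Rel_equivalence {Ob : Type u₁} {H : Ob → Ob → Type u₂} {V : Ob → Ob → Type u₃}
    {Sq : ∀ ⦃a b c d : Ob⦄, H a c → H b d → V a b → V c d → Type u₄}
    (D : DGS Ob H V Sq) (hD : D.Lawful) (hfill : D.toDCS.Filling) (a : Ob) :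
    Equivalence (D.toDCS.Pi1Rel a) := by
  constructor
  · rintro ⟨x, g, u⟩
    obtain ⟨c, f, w, ⟨α⟩⟩ := hfill g u
    exact ⟨c, f, w, ⟨α⟩, ⟨α⟩⟩
  · rintro ⟨x, g, u⟩ ⟨x', g', u'⟩ ⟨c, f, w, hα, hα'⟩
    exact ⟨c, f, w, hα', hα⟩
  · rintro ⟨x, g, u⟩ ⟨x', g', u'⟩ ⟨x'', g'', u''⟩ ⟨c, f, w, ⟨α⟩, ⟨α'⟩⟩
      ⟨c₁, f₁, w₁, ⟨β⟩, ⟨β'⟩⟩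
    refine ⟨c₁, f₁, w₁, ?_, ⟨β'⟩⟩
    have Θ := D.hCompSq (D.hCompSq β (D.hInvSq α')) α
    have hf : D.hComp (D.hComp f₁ (D.hInv f)) f = f₁ := by
      rw [hD.toLawfulDCS.hAssoc, hD.hInvLeft, hD.toLawfulDCS.hIdRight]
    have hg : D.hComp (D.hComp g' (D.hInv g')) g = g := by
      rw [hD.hInvRight, hD.toLawfulDCS.hIdLeft]
    rw [hf, hg] at Θ
    exact ⟨Θ⟩
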